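/- For λ ∈ (0,1) and 0 < Re(s) < (1−λ)/λ, the identity Γ_λ(s+1) = (s/(1−λ)^{s+1}) · Γ_{λ/(1−λ)}(s) holds. -/

import Mathlib

open MeasureTheory Complex

/-- The degenerate gamma function, defined as an integral. -/
noncomputable def degGamma (l : ℝ) (s : ℂ) : ℂ :=
  ∫ t in Set.Ioi (0 : ℝ), ((1 + l * t : ℝ) : ℂ) ^ (-(1 / l) : ℂ) * (t : ℂ) ^ (s - 1)

open Set Filter Topology

-- norm of the integrand
lemma aux_norm {l : ℝ} (hl : 0 < l) (c w : ℂ) {t : ℝ} (ht : 0 < t) :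
    ‖((1 + l * t : ℝ) : ℂ) ^ c * (t : ℂ) ^ w‖ = (1 + l * t) ^ c.re * t ^ w.re := by
  have h1 : (0:ℝ) < 1 + l * t := by nlinarith
  rw [norm_mul,
    Complex.norm_cpow_eq_rpow_re_of_pos h1, Complex.norm_cpow_eq_rpow_re_of_pos ht]

lemma aux_cont {l : ℝ} (hl : 0 < l) (c w : ℂ) :
    ContinuousOn (fun t : ℝ => ((1 + l * t : ℝ) : ℂ) ^ c * (t : ℂ) ^ w) (Ioi 0) := by
  intro t ht
  have ht' : (0:ℝ) < t := ht
  have h1 : (0:ℝ) < 1 + l * t := by nlinarith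
  apply ContinuousAt.continuousWithinAt
  apply ContinuousAt.mul
  · have hbase : ContinuousAt (fun t : ℝ => 1 + l * t) t := by fun_prop
    exact ContinuousAt.comp (g := fun x : ℝ => ((x:ℝ):ℂ) ^ c)
      (Complex.continuousAt_ofReal_cpow_const _ _ (Or.inr h1.ne')) hbase
  · exact Complex.continuousAt_ofReal_cpow_const _ _ (Or.inr ht'.ne')

lemma aux_integrable {l : ℝ} (hl : 0 < l) {c s : ℂ} (h0 : 0 < s.re)
    (htop : s.re - 1 + c.re < -1) :
    IntegrableOn (fun t : ℝ => ((1 + l * t : ℝ) : ℂ) ^ c * (t : ℂ) ^ (s - 1)) (Ioi 0) := by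
  have hcneg : c.re < 0 := by linarith
  have hmeas : AEStronglyMeasurable
      (fun t : ℝ => ((1 + l * t : ℝ) : ℂ) ^ c * (t : ℂ) ^ (s - 1)) (volume.restrict (Ioi 0)) :=
    (aux_cont hl c (s - 1)).aestronglyMeasurable measurableSet_Ioi
  have hunion : Ioc (0:ℝ) 1 ∪ Ioi 1 = Ioi 0 := Ioc_union_Ioi_eq_Ioi zero_le_one
  rw [← hunion, IntegrableOn, Measure.restrict_union (by simp [disjoint_left]) measurableSet_Ioi,
    integrable_add_measure]
  constructor
  · -- on Ioc 0 1
    have hg : IntegrableOn (fun t : ℝ => t ^ (s.re - 1)) (Ioc (0:ℝ) 1) := by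
      have := intervalIntegral.intervalIntegrable_rpow' (a := 0) (b := 1)
        (r := s.re - 1) (by linarith)
      rwa [intervalIntegrable_iff_integrableOn_Ioc_of_le zero_le_one] at this
    refine Integrable.mono' hg (hmeas.mono_measure
      (Measure.restrict_mono (by rw [← hunion]; exact subset_union_left) le_rfl)) ?_
    filter_upwards [ae_restrict_mem measurableSet_Ioc] with t ht
    rw [aux_norm hl c (s-1) ht.1]
    have h1 : (1:ℝ) ≤ 1 + l * t := by nlinarith [ht.1.le]
    have hb : (1 + l * t) ^ c.re ≤ 1 := Real.rpow_le_one_of_one_le_of_nonpos h1 hcneg.le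
    calc (1 + l * t) ^ c.re * t ^ (s - 1).re ≤ 1 * t ^ (s - 1).re :=
          mul_le_mul_of_nonneg_right hb (Real.rpow_nonneg ht.1.le _)
      _ = t ^ (s.re - 1) := by rw [one_mul, Complex.sub_re, Complex.one_re]
  · -- on Ioi 1
    have hg : IntegrableOn (fun t : ℝ => l ^ c.re * t ^ (s.re - 1 + c.re)) (Ioi (1:ℝ)) :=
      (integrableOn_Ioi_rpow_of_lt htop one_pos).const_mul _
    refine Integrable.mono' hg (hmeas.mono_measure
      (Measure.restrict_mono (by rw [← hunion]; exact subset_union_right) le_rfl)) ?_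
    filter_upwards [ae_restrict_mem measurableSet_Ioi] with t ht
    have ht0 : (0:ℝ) < t := lt_trans one_pos ht
    rw [aux_norm hl c (s-1) ht0]
    have hlt : (0:ℝ) < l * t := by positivity
    have h1 : (1 + l * t) ^ c.re ≤ (l * t) ^ c.re :=
      Real.rpow_le_rpow_of_nonpos hlt (by linarith) hcneg.le
    calc (1 + l * t) ^ c.re * t ^ (s - 1).re ≤ (l * t) ^ c.re * t ^ (s.re - 1) := by
          rw [Complex.sub_re, Complex.one_re]
          exact mul_le_mul_of_nonneg_right h1 (Real.rpow_nonneg ht0.le _)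
      _ = l ^ c.re * t ^ (s.re - 1 + c.re) := by
          rw [Real.mul_rpow hl.le ht0.le, Real.rpow_add ht0]; ring

theorem degGamma_shift (l : ℝ) (hl : l ∈ Set.Ioo (0 : ℝ) 1)
    (s : ℂ) (hs : 0 < s.re) (hs' : s.re < (1 - l) / l) :
    degGamma l (s + 1) = s / ((1 - l : ℂ)) ^ (s + 1) * degGamma (l / (1 - l)) s := by
  obtain ⟨hl0, hl1⟩ := hl
  have h1l : (0:ℝ) < 1 - l := by linarith
  have hlC : (l:ℂ) ≠ 0 := by exact_mod_cast hl0.ne'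
  have h1lC : ((1 - l : ℝ):ℂ) ≠ 0 := by exact_mod_cast h1l.ne'
  have h1lC' : (1:ℂ) - (l:ℂ) ≠ 0 := by push_cast at h1lC ⊢; exact h1lC
  have hs0 : s ≠ 0 := by intro h; rw [h] at hs; simp at hs
  set w : ℂ := 1 - 1/(l:ℂ) with hw
  have hwre : w.re = 1 - 1/l := by
    have h : w = ((1 - 1/l : ℝ) : ℂ) := by rw [hw]; push_cast; ring
    rw [h, Complex.ofReal_re]
  have hs'' : s.re < 1/l - 1 := by
    have h : (1-l)/l = 1/l - 1 := by field_simp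
    linarith [h ▸ hs']
  set I : ℂ := ∫ t in Ioi (0:ℝ), ((1 + l * t : ℝ) : ℂ) ^ w * (t : ℂ) ^ (s - 1) with hI
  set b : ℂ := ((1 - l : ℝ):ℂ) with hb
  -- Step 1 : degGamma (l/(1-l)) s = b^s * I
  have step1 : degGamma (l / (1 - l)) s = b ^ s * I := by
    have hexp : (-(1 / (↑(l / (1 - l)) : ℂ))) = w := by
      have h : ((l / (1 - l) : ℝ) : ℂ) = (l:ℂ) / ((1:ℂ) - l) := by push_cast; ring
      rw [h, hw]; field_simp; ring
    have hcov := integral_comp_mul_left_Ioi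
      (fun t : ℝ => ((1 + (l/(1-l)) * t : ℝ) : ℂ) ^ w * (t : ℂ) ^ (s - 1)) 0 h1l
    rw [mul_zero] at hcov
    beta_reduce at hcov
    rw [eq_comm, inv_smul_eq_iff₀ h1l.ne'] at hcov
    have heq : ∀ x ∈ Ioi (0:ℝ),
        ((1 + (l/(1-l)) * ((1-l) * x) : ℝ) : ℂ) ^ w * (((1-l) * x : ℝ) : ℂ) ^ (s - 1)
        = b ^ (s-1) * (((1 + l * x : ℝ) : ℂ) ^ w * (x : ℂ) ^ (s - 1)) := by
      intro x hx
      have h1 : (1 + l/(1-l) * ((1-l) * x) : ℝ) = 1 + l * x := by field_simp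
      rw [h1, Complex.ofReal_mul, mul_cpow_ofReal_nonneg h1l.le (le_of_lt hx) (s-1), hb]
      ring
    rw [degGamma]
    simp_rw [hexp]
    rw [hcov, setIntegral_congr_fun measurableSet_Ioi heq, integral_const_mul, ← hI,
      Complex.real_smul, ← mul_assoc]
    congr 1
    rw [show b ^ s = b ^ ((s-1)+1) by rw [sub_add_cancel], Complex.cpow_add _ _ (hb ▸ h1lC),
      Complex.cpow_one, hb]
    ring
  -- Step 2 : integration by parts
  have hint1 : IntegrableOn
      (fun t : ℝ => ((1 + l * t : ℝ) : ℂ) ^ (-(1/(l:ℂ))) * (t : ℂ) ^ ((s+1) - 1)) (Ioi 0) := by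
    apply aux_integrable hl0 (s := s+1) (by simp [Complex.add_re]; linarith)
    have h : (-(1/(l:ℂ))).re = -(1/l) := by
      have h2 : -(1/(l:ℂ)) = ((-(1/l):ℝ):ℂ) := by push_cast; ring
      rw [h2, Complex.ofReal_re]
    rw [h]; simp only [Complex.add_re, Complex.one_re]; linarith
  have hint2 : IntegrableOn
      (fun t : ℝ => ((1 + l * t : ℝ) : ℂ) ^ w * (t : ℂ) ^ (s - 1)) (Ioi 0) := by
    apply aux_integrable hl0 hs
    rw [hwre]; linarith
  set k : ℂ := -(1/((1:ℂ) - (l:ℂ))) with hk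
  set F : ℝ → ℂ := fun t => k * (((1 + l * t : ℝ) : ℂ) ^ w * (t : ℂ) ^ s) with hF
  have hderiv : ∀ t ∈ Ioi (0:ℝ), HasDerivAt F
      (((1 + l * t : ℝ) : ℂ) ^ (-(1/(l:ℂ))) * (t : ℂ) ^ ((s+1)-1)
        + k * s * (((1 + l * t : ℝ) : ℂ) ^ w * (t : ℂ) ^ (s-1))) t := by
    intro t ht
    have ht' : (0:ℝ) < t := ht
    have h1 : (0:ℝ) < 1 + l * t := by nlinarith
    have hinner : HasDerivAt (fun t : ℝ => (1 + l * t : ℝ)) l t := by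
      simpa using ((hasDerivAt_id t).const_mul l).const_add 1
    have hsp1 : ((1 + l * t : ℝ) : ℂ) ∈ Complex.slitPlane := by
      rw [Complex.mem_slitPlane_iff]; left; simpa using h1
    have hsp2 : ((t : ℝ) : ℂ) ∈ Complex.slitPlane := by
      rw [Complex.mem_slitPlane_iff]; left; simpa using ht'
    have hmid : HasDerivAt (fun u : ℝ => ((u:ℝ):ℂ) ^ w)
        (w * ((1 + l * t : ℝ) : ℂ) ^ (w - 1)) (1 + l * t) :=
      ((Complex.hasStrictDerivAt_cpow_const hsp1).hasDerivAt).comp_ofReal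
    have hA' : HasDerivAt (fun t : ℝ => ((1 + l * t : ℝ) : ℂ) ^ w)
        (w * ((1 + l * t : ℝ) : ℂ) ^ (w - 1) * l) t := by
      have h := HasDerivAt.scomp t hmid hinner
      refine h.congr_deriv (Eq.symm ?_)
      rw [Complex.real_smul]; ring
    have hB : HasDerivAt (fun t : ℝ => (t : ℂ) ^ s) (s * (t : ℂ) ^ (s-1)) t :=
      ((Complex.hasStrictDerivAt_cpow_const hsp2).hasDerivAt).comp_ofReal
    have hD := (hA'.mul hB).const_mul k
    refine hD.congr_deriv (Eq.symm ?_)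
    have hkwl : k * (w * (l:ℂ)) = 1 := by rw [hk, hw]; field_simp; ring
    have hw1 : w - 1 = -(1/(l:ℂ)) := by rw [hw]; ring
    clear_value w k
    rw [← hw1, show (s+1-1 : ℂ) = s by ring]
    linear_combination (-(((1 + l * t : ℝ) : ℂ) ^ (w-1) * (t : ℂ) ^ s)) * hkwl
  have hcont0 : ContinuousWithinAt F (Ici 0) 0 := by
    apply ContinuousAt.continuousWithinAt
    apply continuousAt_const.mul (ContinuousAt.mul ?_ ?_)
    · have hbase : ContinuousAt (fun t : ℝ => 1 + l * t) 0 := by fun_prop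
      have h10 : (1 + l * 0 : ℝ) ≠ 0 := by norm_num
      exact ContinuousAt.comp (g := fun x : ℝ => ((x:ℝ):ℂ) ^ w)
        (Complex.continuousAt_ofReal_cpow_const _ _ (Or.inr h10)) hbase
    · exact (Complex.continuous_ofReal_cpow_const hs).continuousAt
  have hF0 : F 0 = 0 := by
    have h0 : ((0:ℝ):ℂ) ^ s = 0 := by
      rw [Complex.ofReal_zero, Complex.zero_cpow hs0]
    simp only [hF]
    beta_reduce
    rw [h0, mul_zero, mul_zero]
  have htend : Tendsto F atTop (𝓝 0) := by
    have hgt : Tendsto (fun t : ℝ => (‖k‖ * l ^ w.re) * t ^ (s.re + w.re)) atTop (𝓝 0) := by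
      have hexp : s.re + w.re < 0 := by rw [hwre]; linarith
      have h3 := (tendsto_rpow_neg_atTop (y := -(s.re + w.re)) (by linarith)).const_mul
        (‖k‖ * l ^ w.re)
      simpa using h3
    refine squeeze_zero_norm' ?_ hgt
    · filter_upwards [eventually_ge_atTop (1:ℝ)] with t ht
      have ht0 : (0:ℝ) < t := lt_of_lt_of_le one_pos ht
      have h1 : (0:ℝ) < 1 + l * t := by nlinarith
      rw [hF, norm_mul, aux_norm hl0 w s ht0]
      have hwneg : w.re ≤ 0 := by
        rw [hwre]
        have h2 : 1 ≤ 1/l := by rw [le_div_iff₀ hl0]; linarith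
        linarith
      have hlt : (0:ℝ) < l * t := by positivity
      have hb2 : (1 + l*t) ^ w.re ≤ (l*t) ^ w.re :=
        Real.rpow_le_rpow_of_nonpos hlt (by linarith) hwneg
      calc ‖k‖ * ((1 + l*t) ^ w.re * t ^ s.re)
          ≤ ‖k‖ * ((l*t) ^ w.re * t ^ s.re) := by
            apply mul_le_mul_of_nonneg_left _ (norm_nonneg k)
            exact mul_le_mul_of_nonneg_right hb2 (Real.rpow_nonneg ht0.le _)
        _ = (‖k‖ * l ^ w.re) * t ^ (s.re + w.re) := by
            rw [Real.mul_rpow hl0.le ht0.le, Real.rpow_add ht0]; ring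
  have hintF' : IntegrableOn
      (fun t : ℝ => ((1 + l * t : ℝ) : ℂ) ^ (-(1/(l:ℂ))) * (t : ℂ) ^ ((s+1) - 1)
        + k * s * (((1 + l * t : ℝ) : ℂ) ^ w * (t : ℂ) ^ (s-1))) (Ioi 0) :=
    hint1.add (hint2.const_mul _)
  have key := integral_Ioi_of_hasDerivAt_of_tendsto hcont0 hderiv hintF' htend
  rw [hF0, sub_zero, integral_add hint1 (hint2.const_mul _), integral_const_mul, ← hI] at key
  have step2 : degGamma l (s + 1) = -(k * s) * I := by
    rw [degGamma]
    have hg : (∫ t in Ioi (0:ℝ), ((1 + l * t : ℝ) : ℂ) ^ (-(1 / l) : ℂ) * (t : ℂ) ^ ((s+1) - 1))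
        = ∫ t in Ioi (0:ℝ), ((1 + l * t : ℝ) : ℂ) ^ (-(1/(l:ℂ))) * (t : ℂ) ^ ((s+1) - 1) := rfl
    rw [hg]
    linear_combination key
  -- conclude
  rw [step1, step2]
  have hbb : ((1:ℂ) - (l:ℝ)) = b := by rw [hb]; push_cast; ring
  rw [hbb]
  have hbs : b ^ s ≠ 0 := by
    intro h
    rw [Complex.cpow_eq_zero_iff] at h
    exact h1lC h.1
  have hbs1 : b ^ (s+1) = b ^ s * b := by
    rw [Complex.cpow_add _ _ h1lC, Complex.cpow_one]
  rw [hbs1]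
  have hkval : -(k * s) = s / b := by
    rw [hk, hb]; push_cast; field_simp
  rw [hkval]
  field_simp
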